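/- Let R : ℝ^m → ℝ^m be strictly differentiable at y⋆ with R(y⋆) = 0 and nonsingular Jacobian J⋆. Suppose y^k → y⋆, d^k = B_k^{-1}(-R(y^k)) for nonsingular matrices B_k, R(y^k) → 0, and the Dennis–Moré condition ‖(B_k - J⋆)d^k‖/‖d^k‖ → 0 holds. Then ‖y^k + d^k - y⋆‖/‖y^k - y⋆‖ → 0, i.e., the directions are superlinearly convergent. -/

import Mathlib

open scoped InnerProductSpace RealInnerProductSpace
open Filter Topology

noncomputable section

abbrev E (n : ℕ) := EuclideanSpace ℝ (Fin n)

/-- Convexity for extended-real-valued functions. -/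
def EConvexOn {n : ℕ} (f : E n → EReal) : Prop :=
  ∀ x y : E n, ∀ a b : ℝ, 0 ≤ a → 0 ≤ b → a + b = 1 →
    f (a • x + b • y) ≤ (a : EReal) * f x + (b : EReal) * f y

def ProperFun {n : ℕ} (f : E n → EReal) : Prop :=
  (∃ x, f x ≠ ⊤) ∧ ∀ x, f x ≠ ⊥

def ProperClosedConvex {n : ℕ} (f : E n → EReal) : Prop :=
  ProperFun f ∧ LowerSemicontinuous f ∧ EConvexOn f

/-- `f` is strongly convex with modulus `μ`: `f - (μ/2)‖·‖²` is convex. -/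
def StronglyConvexWithMod {n : ℕ} (μ : ℝ) (f : E n → EReal) : Prop :=
  EConvexOn (fun x => f x - ((μ / 2 * ‖x‖ ^ 2 : ℝ) : EReal))

/-- Fenchel conjugate. -/
def conjFn {n : ℕ} (f : E n → EReal) (y : E n) : EReal :=
  ⨆ x : E n, ((⟪x, y⟫_ℝ : ℝ) : EReal) - f x

/-- Convex subdifferential. -/
def Subdiff {n : ℕ} (f : E n → EReal) (x : E n) : Set (E n) :=
  {v | ∀ z, f x + ((⟪v, z - x⟫_ℝ : ℝ) : EReal) ≤ f z}

/-- `p` is the proximal point of `x` for `h` with stepsize `γ`. -/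
def IsProx {n : ℕ} (γ : ℝ) (h : E n → EReal) (x p : E n) : Prop :=
  ∀ z : E n, h p + ((1 / (2 * γ) * ‖p - x‖ ^ 2 : ℝ) : EReal) ≤
    h z + ((1 / (2 * γ) * ‖z - x‖ ^ 2 : ℝ) : EReal)

/-- Moreau envelope. -/
def moreauEnv {n : ℕ} (γ : ℝ) (h : E n → EReal) (x : E n) : EReal :=
  ⨅ z : E n, h z + ((1 / (2 * γ) * ‖z - x‖ ^ 2 : ℝ) : EReal)

/-- Dual objective `ψ(y) = f*(-Aᵀy) + g*(y)`. -/
def dualObj {n m : ℕ} (f : E n → EReal) (g : E m → EReal) (A : E n →L[ℝ] E m)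
    (y : E m) : EReal :=
  conjFn f (-(ContinuousLinearMap.adjoint A y)) + conjFn g y

/-- The alternating minimization envelope `ψ_γ(y) = -L_γ(x(y), z_γ(y), y)`. -/
def AME {n m : ℕ} (f : E n → EReal) (g : E m → EReal) (A : E n →L[ℝ] E m)
    (γ : ℝ) (xmin : E m → E n) (zmin : E m → E m) (y : E m) : EReal :=
  -(f (xmin y) + g (zmin y)
    + ((⟪y, A (xmin y) - zmin y⟫_ℝ + γ / 2 * ‖A (xmin y) - zmin y‖ ^ 2 : ℝ) : EReal))


/-- Dennis-Moré theorem: quasi-Newton directions satisfying the Dennis-Moré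
condition are superlinearly convergent. -/
theorem dennis_more_superlinear
    {m : ℕ} (R : E m → E m) (ystar : E m) (J : E m →L[ℝ] E m)
    (hstrict : HasStrictFDerivAt R J ystar)
    (hzero : R ystar = 0)
    (hnonsing : ∃ α > (0:ℝ), ∀ v : E m, α * ‖v‖ ≤ ‖J v‖)
    (y d : ℕ → E m) (B : ℕ → E m →L[ℝ] E m)
    (hconv : Tendsto y atTop (nhds ystar))
    (hne : ∀ k, y k ≠ ystar) (hd : ∀ k, d k ≠ 0)
    (hB : ∀ k, B k (d k) = -(R (y k)))
    (hres : Tendsto (fun k : ℕ => R (y k)) atTop (nhds 0))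
    (hDM : Tendsto (fun k : ℕ => ‖B k (d k) - J (d k)‖ / ‖d k‖) atTop (nhds 0)) :
    Tendsto (fun k : ℕ => ‖y k + d k - ystar‖ / ‖y k - ystar‖) atTop (nhds 0) := by
  obtain ⟨α, hα, hJlow⟩ := hnonsing
  -- error ratios
  set ε : ℕ → ℝ := fun k => ‖B k (d k) - J (d k)‖ / ‖d k‖ with hεdef
  set δ : ℕ → ℝ := fun k => ‖R (y k) - J (y k - ystar)‖ / ‖y k - ystar‖ with hδdef
  have hne' : ∀ k, ‖y k - ystar‖ ≠ 0 := fun k => by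
    simpa [sub_eq_zero] using hne k
  have hd' : ∀ k, ‖d k‖ ≠ 0 := fun k => by simpa using hd k
  -- δ → 0 from differentiability
  have hδ0 : Tendsto δ atTop (𝓝 0) := by
    have h1 : (fun x => R x - R ystar - J (x - ystar)) =o[𝓝 ystar] fun x => x - ystar :=
      hstrict.hasFDerivAt.isLittleO
    have h2 : (fun k => R (y k) - J (y k - ystar)) =o[atTop] fun k => y k - ystar := by
      have := h1.comp_tendsto hconv
      simpa [hzero, Function.comp_def] using this
    have h3 := h2.norm_norm
    have h4 : ∀ k : ℕ, ‖y k - ystar‖ = 0 → ‖R (y k) - J (y k - ystar)‖ = 0 :=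
      fun k hk => absurd hk (hne' k)
    exact (Asymptotics.isLittleO_iff_tendsto h4).mp h3
  set M : ℝ := 2 / α * (‖J‖ + 1) with hM
  -- bounding sequence
  have hg : Tendsto (fun k => (δ k + M * ε k) / α) atTop (𝓝 0) := by
    have := (hδ0.add (hDM.const_mul M)).div_const α
    simpa using this
  have hev1 : ∀ᶠ k in atTop, ε k ≤ α / 2 := hDM.eventually_le_const (half_pos hα)
  have hev2 : ∀ᶠ k in atTop, δ k ≤ 1 := hδ0.eventually_le_const one_pos
  refine squeeze_zero' (Eventually.of_forall fun k => by positivity) ?_ hg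
  filter_upwards [hev1, hev2] with k h1 h2
  have hepos : (0:ℝ) < ‖y k - ystar‖ := lt_of_le_of_ne (norm_nonneg _) (Ne.symm (hne' k))
  have hεnn : 0 ≤ ε k := div_nonneg (norm_nonneg _) (norm_nonneg _)
  have hεmul : ε k * ‖d k‖ = ‖B k (d k) - J (d k)‖ := div_mul_cancel₀ _ (hd' k)
  have hδmul : δ k * ‖y k - ystar‖ = ‖R (y k) - J (y k - ystar)‖ :=
    div_mul_cancel₀ _ (hne' k)
  -- Step A : ‖R (y k)‖ ≤ (‖J‖+1) * ‖y k - ystar‖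
  have hA : ‖R (y k)‖ ≤ (‖J‖ + 1) * ‖y k - ystar‖ := by
    have hJe : ‖J (y k - ystar)‖ ≤ ‖J‖ * ‖y k - ystar‖ := J.le_opNorm _
    have h5 : ‖R (y k) - J (y k - ystar)‖ ≤ 1 * ‖y k - ystar‖ := by
      rw [← hδmul]
      exact mul_le_mul_of_nonneg_right h2 (norm_nonneg _)
    calc ‖R (y k)‖ = ‖(R (y k) - J (y k - ystar)) + J (y k - ystar)‖ := by
          congr 1; abel
      _ ≤ ‖R (y k) - J (y k - ystar)‖ + ‖J (y k - ystar)‖ := norm_add_le _ _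
      _ ≤ 1 * ‖y k - ystar‖ + ‖J‖ * ‖y k - ystar‖ := add_le_add h5 hJe
      _ = (‖J‖ + 1) * ‖y k - ystar‖ := by ring
  -- Step B : ‖d k‖ ≤ 2/α * ‖R (y k)‖
  have hB2 : ‖d k‖ ≤ 2 / α * ‖R (y k)‖ := by
    have hJd : α * ‖d k‖ ≤ ‖J (d k)‖ := hJlow _
    have h6 : ‖J (d k)‖ ≤ ‖B k (d k) - J (d k)‖ + ‖R (y k)‖ := by
      calc ‖J (d k)‖ = ‖B k (d k) - (B k (d k) - J (d k))‖ := by congr 1; abel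
        _ ≤ ‖B k (d k)‖ + ‖B k (d k) - J (d k)‖ := norm_sub_le _ _
        _ = ‖B k (d k) - J (d k)‖ + ‖R (y k)‖ := by rw [hB k, norm_neg]; ring
    have h7 : ‖B k (d k) - J (d k)‖ ≤ α / 2 * ‖d k‖ := by
      rw [← hεmul]
      exact mul_le_mul_of_nonneg_right h1 (norm_nonneg _)
    rw [div_mul_eq_mul_div, le_div_iff₀ hα]
    nlinarith
  -- Step C : α * ‖y k + d k - ystar‖ ≤ δ k * ‖y k - ystar‖ + ε k * ‖d k‖
  have hkey : J (y k + d k - ystar)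
      = (J (y k - ystar) - R (y k)) - (B k (d k) - J (d k)) := by
    have : y k + d k - ystar = d k + (y k - ystar) := by abel
    rw [this, map_add, hB k]
    abel
  have hC : α * ‖y k + d k - ystar‖ ≤ δ k * ‖y k - ystar‖ + ε k * ‖d k‖ := by
    calc α * ‖y k + d k - ystar‖ ≤ ‖J (y k + d k - ystar)‖ := hJlow _
      _ = ‖(J (y k - ystar) - R (y k)) - (B k (d k) - J (d k))‖ := by rw [hkey]
      _ ≤ ‖J (y k - ystar) - R (y k)‖ + ‖B k (d k) - J (d k)‖ := norm_sub_le _ _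
      _ = ‖R (y k) - J (y k - ystar)‖ + ‖B k (d k) - J (d k)‖ := by rw [norm_sub_rev]
      _ = δ k * ‖y k - ystar‖ + ε k * ‖d k‖ := by rw [hδmul, hεmul]
  -- combine
  have hdk : ε k * ‖d k‖ ≤ ε k * (M * ‖y k - ystar‖) := by
    apply mul_le_mul_of_nonneg_left _ hεnn
    calc ‖d k‖ ≤ 2 / α * ‖R (y k)‖ := hB2
      _ ≤ 2 / α * ((‖J‖ + 1) * ‖y k - ystar‖) := by
          apply mul_le_mul_of_nonneg_left hA (by positivity)
      _ = M * ‖y k - ystar‖ := by rw [hM]; ring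
  have hfin : α * ‖y k + d k - ystar‖ ≤ (δ k + M * ε k) * ‖y k - ystar‖ := by
    calc α * ‖y k + d k - ystar‖ ≤ δ k * ‖y k - ystar‖ + ε k * ‖d k‖ := hC
      _ ≤ δ k * ‖y k - ystar‖ + ε k * (M * ‖y k - ystar‖) := by linarith
      _ = (δ k + M * ε k) * ‖y k - ystar‖ := by ring
  rw [div_le_div_iff₀ hepos hα]
  nlinarith
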